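/- Let Δ be the maximum degree of H̄, let i ≥ 0 be an integer with dn ≥ 2i + 7d, and let G be a d-regular simple graph on V with exactly i red edges. Then the number f(G) of 6-tuples valid for a 3-edge switching on G satisfies 2i(dn−2i−4d)(dn−2i−7d) − 6id²(d+Δ)n ≤ f(G) ≤ 2i(dn)². -/

import Mathlib

open SimpleGraph
open scoped Classical

/-- A 6-tuple `(v0,…,v5)` is valid for a 3-edge switching on `G` (host graph `H`). -/
def Valid3Switch {n : ℕ} (H G : SimpleGraph (Fin n))
    (v0 v1 v2 v3 v4 v5 : Fin n) : Prop :=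
  (G.Adj v0 v1 ∧ Hᶜ.Adj v0 v1) ∧
  (G.Adj v2 v3 ∧ H.Adj v2 v3) ∧
  (G.Adj v4 v5 ∧ H.Adj v4 v5) ∧
  (¬ G.Adj v0 v5 ∧ H.Adj v0 v5) ∧
  (¬ G.Adj v1 v2 ∧ H.Adj v1 v2) ∧
  (¬ G.Adj v3 v4 ∧ H.Adj v3 v4) ∧
  List.Pairwise (· ≠ ·) [v0, v1, v3, v4] ∧
  (∀ x ∈ [v0, v1, v3, v4], v2 ≠ x ∧ v5 ≠ x)

/-- `f(G)`: the number of 6-tuples valid for a 3-edge switching on `G`. -/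
noncomputable def f3 {n : ℕ} (H G : SimpleGraph (Fin n)) : ℕ :=
  Nat.card {v : Fin 6 → Fin n //
    Valid3Switch H G (v 0) (v 1) (v 2) (v 3) (v 4) (v 5)}

section Helpers

open Finset

variable {V : Type*} [Fintype V] [DecidableEq V]

lemma card_darts_fst_mem (G : SimpleGraph V) [DecidableRel G.Adj] (s : Finset V) :
    (Finset.univ.filter fun dd : G.Dart => dd.fst ∈ s).card = ∑ v ∈ s, G.degree v := by
  rw [Finset.card_eq_sum_card_fiberwise (f := fun dd : G.Dart => dd.fst) (t := s)
    (s := Finset.univ.filter fun dd : G.Dart => dd.fst ∈ s)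
    (fun x hx => (Finset.mem_filter.mp (Finset.mem_coe.mp hx)).2)]
  refine Finset.sum_congr rfl fun v hv => ?_
  rw [← SimpleGraph.dart_fst_fiber_card_eq_degree]
  congr 1
  ext dd
  simp only [Finset.mem_filter, Finset.mem_univ, true_and]
  constructor
  · rintro ⟨-, h⟩; exact h
  · rintro h; exact ⟨h ▸ hv, h⟩

lemma card_darts_snd_mem (G : SimpleGraph V) [DecidableRel G.Adj] (s : Finset V) :
    (Finset.univ.filter fun dd : G.Dart => dd.snd ∈ s).card = ∑ v ∈ s, G.degree v := by
  rw [← card_darts_fst_mem G s]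
  apply Finset.card_bij' (fun dd _ => dd.symm) (fun dd _ => dd.symm)
  · intro a _; exact SimpleGraph.Dart.symm_symm a
  · intro a _; exact SimpleGraph.Dart.symm_symm a
  · intro a ha; simp only [mem_filter, mem_univ, true_and] at ha ⊢; exact ha
  · intro a ha; simp only [mem_filter, mem_univ, true_and] at ha ⊢; exact ha

lemma card_darts_fst_le (G : SimpleGraph V) [DecidableRel G.Adj] (s : Finset V)
    {P : G.Dart → Prop} [DecidablePred P] (h : ∀ f : G.Dart, P f → f.fst ∈ s) :
    (Finset.univ.filter P).card ≤ ∑ v ∈ s, G.degree v := by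
  rw [← card_darts_fst_mem G s]
  refine Finset.card_le_card fun f hf => ?_
  simp only [Finset.mem_filter, Finset.mem_univ, true_and] at hf ⊢
  exact h f hf

lemma card_darts_snd_le (G : SimpleGraph V) [DecidableRel G.Adj] (s : Finset V)
    {P : G.Dart → Prop} [DecidablePred P] (h : ∀ f : G.Dart, P f → f.snd ∈ s) :
    (Finset.univ.filter P).card ≤ ∑ v ∈ s, G.degree v := by
  rw [← card_darts_snd_mem G s]
  refine Finset.card_le_card fun f hf => ?_
  simp only [Finset.mem_filter, Finset.mem_univ, true_and] at hf ⊢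
  exact h f hf

lemma card_filter_or_le {α : Type*} [Fintype α] (p q : α → Prop)
    [DecidablePred p] [DecidablePred q] [DecidablePred fun a => p a ∨ q a] :
    (Finset.univ.filter fun a => p a ∨ q a).card ≤
      (Finset.univ.filter p).card + (Finset.univ.filter q).card := by
  refine le_trans (Finset.card_le_card ?_) (Finset.card_union_le _ _)
  intro a ha
  simp only [mem_filter, mem_univ, true_and, Finset.mem_union] at ha ⊢
  exact ha

omit [DecidableEq V] in
lemma card_red_darts_le (G K : SimpleGraph V) [DecidableRel G.Adj]
    {P : G.Dart → Prop} [DecidablePred P] (h : ∀ f : G.Dart, P f → K.Adj f.fst f.snd) :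
    (Finset.univ.filter P).card ≤ Nat.card (G ⊓ K).Dart := by
  rw [Nat.card_eq_fintype_card, ← Fintype.card_coe]
  apply Fintype.card_le_of_injective
    (fun x => ⟨x.1.toProd, x.1.adj, h x.1 (Finset.mem_filter.mp x.2).2⟩)
  intro a b hab
  have h2 := congrArg SimpleGraph.Dart.toProd hab
  exact Subtype.ext (SimpleGraph.Dart.ext _ _ h2)

end Helpers

lemma arith_lower (i d n Δ A B F : ℤ) (hi0 : 0 ≤ i) (hd0 : 0 ≤ d) (hΔ0 : 0 ≤ Δ)
    (hdn : 2 * i + 7 * d ≤ d * n)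
    (hA0 : 0 ≤ A) (hB0 : 0 ≤ B)
    (hAge : d * n - 2 * i - 4 * d - (d * d + Δ * d) ≤ A)
    (hBge : d * n - 2 * i - 7 * d - 2 * (d * d + Δ * d) ≤ B)
    (hF : 2 * i * (A * B) ≤ F) (hF0 : 0 ≤ F) :
    2 * i * (d * n - 2 * i - 4 * d) * (d * n - 2 * i - 7 * d)
      - 6 * i * d ^ 2 * (d + Δ) * n ≤ F := by
  set c : ℤ := d * d + Δ * d with hcdef
  set a : ℤ := d * n - 2 * i - 4 * d with hadef
  set b : ℤ := d * n - 2 * i - 7 * d with hbdef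
  have hc0 : 0 ≤ c := by positivity
  have ha0 : 0 ≤ a := by rw [hadef]; linarith
  have hb0 : 0 ≤ b := by rw [hbdef]; linarith
  have haN : a ≤ d * n := by rw [hadef]; linarith
  have hbN : b ≤ d * n := by rw [hbdef]; linarith
  have hterm : 6 * i * d ^ 2 * (d + Δ) * n = 6 * (i * (c * (d * n))) := by
    rw [hcdef]; ring
  rw [hterm]
  have hdn0 : 0 ≤ d * n := le_trans ha0 haN
  rcases le_or_gt a c with hcase | hcase
  · have k1 : a * b ≤ c * (d * n) := mul_le_mul hcase hbN hb0 hc0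
    have k2 : i * (a * b) ≤ i * (c * (d * n)) := mul_le_mul_of_nonneg_left k1 hi0
    have k3 : 0 ≤ i * (c * (d * n)) := mul_nonneg hi0 (mul_nonneg hc0 hdn0)
    have : 2 * i * a * b - 6 * (i * (c * (d * n))) ≤ 0 := by linarith
    linarith
  rcases le_or_gt b (2 * c) with hcase2 | hcase2
  · have k1 : a * b ≤ (d * n) * (2 * c) := mul_le_mul haN hcase2 hb0 hdn0
    have k2 : i * (a * b) ≤ i * ((d * n) * (2 * c)) := mul_le_mul_of_nonneg_left k1 hi0
    have k3 : 0 ≤ i * (c * (d * n)) := mul_nonneg hi0 (mul_nonneg hc0 hdn0)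
    have : 2 * i * a * b - 6 * (i * (c * (d * n))) ≤ 0 := by linarith
    linarith
  · have k : (a - c) * (b - 2 * c) ≤ A * B := mul_le_mul hAge hBge (by linarith) hA0
    have k2 : 2 * i * ((a - c) * (b - 2 * c)) ≤ 2 * i * (A * B) :=
      mul_le_mul_of_nonneg_left k (by linarith)
    have q1 : 0 ≤ c * (d * n - a) := mul_nonneg hc0 (by linarith)
    have q2 : 0 ≤ c * (d * n - b) := mul_nonneg hc0 (by linarith)
    have q3 : 0 ≤ c * c := mul_self_nonneg c
    have inner0 : 0 ≤ (a - c) * (b - 2 * c) - a * b + 3 * (c * (d * n)) := by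
      have hid : (a - c) * (b - 2 * c) - a * b + 3 * (c * (d * n)) =
          2 * (c * (d * n - a)) + c * (d * n - b) + 2 * (c * c) := by ring
      rw [hid]; linarith
    have h5 : 0 ≤ 2 * i * ((a - c) * (b - 2 * c) - a * b + 3 * (c * (d * n))) :=
      mul_nonneg (by linarith) inner0
    have h6 : 2 * i * a * b - 6 * (i * (c * (d * n))) ≤
        2 * i * ((a - c) * (b - 2 * c)) := by linarith [h5]
    linarith

set_option maxHeartbeats 2000000 in
theorem stmt_4 (n d i : ℕ) (hn : 0 < n) (hd : 0 < d)
    (H : SimpleGraph (Fin n)) (hdn : 2 * i + 7 * d ≤ d * n)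
    (G : SimpleGraph (Fin n)) (hreg : G.IsRegularOfDegree d)
    (hred : (G ⊓ Hᶜ).edgeSet.ncard = i) :
    (2 * i * (d * n - 2 * i - 4 * d) * (d * n - 2 * i - 7 * d)
        - 6 * i * d ^ 2 * (d + Hᶜ.maxDegree) * n : ℤ) ≤ (f3 H G : ℤ) ∧
      (f3 H G : ℤ) ≤ 2 * i * (d * n) ^ 2 := by
  classical
  set Δ := Hᶜ.maxDegree with hΔ
  -- basic counts
  have hcardβ : Nat.card G.Dart = d * n := by
    rw [Nat.card_eq_fintype_card, SimpleGraph.dart_card_eq_sum_degrees]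
    rw [Finset.sum_congr rfl (fun v _ => hreg v), Finset.sum_const, smul_eq_mul,
      Finset.card_univ, Fintype.card_fin, Nat.mul_comm]
  have hcardα : Nat.card (G ⊓ Hᶜ).Dart = 2 * i := by
    rw [Nat.card_eq_fintype_card, SimpleGraph.dart_card_eq_twice_card_edges]
    congr 1
    rw [← Set.ncard_coe_finset, SimpleGraph.coe_edgeFinset]
    exact hred
  -- generic counting helpers specialized to the regular graph G
  have keyfst : ∀ (s : Finset (Fin n)) {P : G.Dart → Prop} (inst : DecidablePred P),
      (∀ f : G.Dart, P f → f.fst ∈ s) →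
      (@Finset.filter _ P inst Finset.univ).card ≤ s.card * d := by
    intro s P inst h
    refine le_trans (card_darts_fst_le G s h) (le_of_eq ?_)
    rw [Finset.sum_congr rfl (fun v _ => hreg v), Finset.sum_const, smul_eq_mul]
  have keysnd : ∀ (s : Finset (Fin n)) {P : G.Dart → Prop} (inst : DecidablePred P),
      (∀ f : G.Dart, P f → f.snd ∈ s) →
      (@Finset.filter _ P inst Finset.univ).card ≤ s.card * d := by
    intro s P inst h
    refine le_trans (card_darts_snd_le G s h) (le_of_eq ?_)
    rw [Finset.sum_congr rfl (fun v _ => hreg v), Finset.sum_const, smul_eq_mul]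
  have keyfst1 : ∀ (w : Fin n) {P : G.Dart → Prop} (inst : DecidablePred P),
      (∀ f : G.Dart, P f → f.fst = w) →
      (@Finset.filter _ P inst Finset.univ).card ≤ d := by
    intro w P inst h
    have := keyfst {w} inst (fun f hf => Finset.mem_singleton.mpr (h f hf))
    simpa using this
  have keysnd1 : ∀ (w : Fin n) {P : G.Dart → Prop} (inst : DecidablePred P),
      (∀ f : G.Dart, P f → f.snd = w) →
      (@Finset.filter _ P inst Finset.univ).card ≤ d := by
    intro w P inst h
    have := keysnd {w} inst (fun f hf => Finset.mem_singleton.mpr (h f hf))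
    simpa using this
  have keyfstG : ∀ (w : Fin n) {P : G.Dart → Prop} (inst : DecidablePred P),
      (∀ f : G.Dart, P f → G.Adj w f.fst) →
      (@Finset.filter _ P inst Finset.univ).card ≤ d * d := by
    intro w P inst h
    have := keyfst (G.neighborFinset w) inst
      (fun f hf => (SimpleGraph.mem_neighborFinset _ _ _).mpr (h f hf))
    rwa [SimpleGraph.card_neighborFinset_eq_degree, hreg w] at this
  have keysndG : ∀ (w : Fin n) {P : G.Dart → Prop} (inst : DecidablePred P),
      (∀ f : G.Dart, P f → G.Adj w f.snd) →
      (@Finset.filter _ P inst Finset.univ).card ≤ d * d := by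
    intro w P inst h
    have := keysnd (G.neighborFinset w) inst
      (fun f hf => (SimpleGraph.mem_neighborFinset _ _ _).mpr (h f hf))
    rwa [SimpleGraph.card_neighborFinset_eq_degree, hreg w] at this
  have keyfstH : ∀ (w : Fin n) {P : G.Dart → Prop} (inst : DecidablePred P),
      (∀ f : G.Dart, P f → Hᶜ.Adj w f.fst) →
      (@Finset.filter _ P inst Finset.univ).card ≤ Δ * d := by
    intro w P inst h
    have := keyfst (Hᶜ.neighborFinset w) inst
      (fun f hf => (SimpleGraph.mem_neighborFinset _ _ _).mpr (h f hf))
    rw [SimpleGraph.card_neighborFinset_eq_degree] at this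
    exact le_trans this (Nat.mul_le_mul_right d (Hᶜ.degree_le_maxDegree w))
  have keysndH : ∀ (w : Fin n) {P : G.Dart → Prop} (inst : DecidablePred P),
      (∀ f : G.Dart, P f → Hᶜ.Adj w f.snd) →
      (@Finset.filter _ P inst Finset.univ).card ≤ Δ * d := by
    intro w P inst h
    have := keysnd (Hᶜ.neighborFinset w) inst
      (fun f hf => (SimpleGraph.mem_neighborFinset _ _ _).mpr (h f hf))
    rw [SimpleGraph.card_neighborFinset_eq_degree] at this
    exact le_trans this (Nat.mul_le_mul_right d (Hᶜ.degree_le_maxDegree w))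
  have keyred : ∀ {P : G.Dart → Prop} (inst : DecidablePred P),
      (∀ f : G.Dart, P f → Hᶜ.Adj f.fst f.snd) →
      (@Finset.filter _ P inst Finset.univ).card ≤ 2 * i := by
    intro P inst h
    exact le_trans (card_red_darts_le G Hᶜ h) (le_of_eq hcardα)
  -- bad-configuration predicates
  set Bad1 : (G ⊓ Hᶜ).Dart → G.Dart → Prop := fun e f =>
    Hᶜ.Adj f.fst f.snd ∨ G.Adj e.snd f.fst ∨ Hᶜ.Adj e.snd f.fst ∨
    f.fst = e.snd ∨ f.fst = e.fst ∨ f.snd = e.fst ∨ f.snd = e.snd with hBad1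
  set Bad2 : (G ⊓ Hᶜ).Dart → G.Dart → G.Dart → Prop := fun e f g =>
    Hᶜ.Adj g.fst g.snd ∨ G.Adj f.snd g.fst ∨ Hᶜ.Adj f.snd g.fst ∨
    G.Adj e.fst g.snd ∨ Hᶜ.Adj e.fst g.snd ∨
    g.fst = f.snd ∨ g.fst = e.fst ∨ g.fst = e.snd ∨ g.fst = f.fst ∨
    g.snd = e.fst ∨ g.snd = e.snd ∨ g.snd = f.snd with hBad2
  set E1 : ℕ := 2 * i + (d * d + (Δ * d + (d + (d + (d + d))))) with hE1
  set E2 : ℕ := 2 * i + (d * d + (Δ * d + (d * d + (Δ * d +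
    (d + (d + (d + (d + (d + (d + d)))))))))) with hE2
  have hB1 : ∀ e, (Finset.univ.filter (Bad1 e)).card ≤ E1 := by
    intro e
    rw [hE1]
    simp only [hBad1]
    refine le_trans (card_filter_or_le _ _) (Nat.add_le_add (keyred _ (fun f hf => hf)) ?_)
    refine le_trans (card_filter_or_le _ _) (Nat.add_le_add (keyfstG _ _ (fun f hf => hf)) ?_)
    refine le_trans (card_filter_or_le _ _) (Nat.add_le_add (keyfstH _ _ (fun f hf => hf)) ?_)
    refine le_trans (card_filter_or_le _ _) (Nat.add_le_add (keyfst1 _ _ (fun f hf => hf)) ?_)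
    refine le_trans (card_filter_or_le _ _) (Nat.add_le_add (keyfst1 _ _ (fun f hf => hf)) ?_)
    exact le_trans (card_filter_or_le _ _) (Nat.add_le_add (keysnd1 _ _ (fun f hf => hf))
      (keysnd1 _ _ (fun f hf => hf)))
  have hB2 : ∀ e f, (Finset.univ.filter (Bad2 e f)).card ≤ E2 := by
    intro e f
    rw [hE2]
    simp only [hBad2]
    refine le_trans (card_filter_or_le _ _) (Nat.add_le_add (keyred _ (fun g hg => hg)) ?_)
    refine le_trans (card_filter_or_le _ _) (Nat.add_le_add (keyfstG _ _ (fun g hg => hg)) ?_)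
    refine le_trans (card_filter_or_le _ _) (Nat.add_le_add (keyfstH _ _ (fun g hg => hg)) ?_)
    refine le_trans (card_filter_or_le _ _) (Nat.add_le_add (keysndG _ _ (fun g hg => hg)) ?_)
    refine le_trans (card_filter_or_le _ _) (Nat.add_le_add (keysndH _ _ (fun g hg => hg)) ?_)
    refine le_trans (card_filter_or_le _ _) (Nat.add_le_add (keyfst1 _ _ (fun g hg => hg)) ?_)
    refine le_trans (card_filter_or_le _ _) (Nat.add_le_add (keyfst1 _ _ (fun g hg => hg)) ?_)
    refine le_trans (card_filter_or_le _ _) (Nat.add_le_add (keyfst1 _ _ (fun g hg => hg)) ?_)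
    refine le_trans (card_filter_or_le _ _) (Nat.add_le_add (keyfst1 _ _ (fun g hg => hg)) ?_)
    refine le_trans (card_filter_or_le _ _) (Nat.add_le_add (keysnd1 _ _ (fun g hg => hg)) ?_)
    exact le_trans (card_filter_or_le _ _) (Nat.add_le_add (keysnd1 _ _ (fun g hg => hg))
      (keysnd1 _ _ (fun g hg => hg)))
  set A : ℕ := d * n - E1 with hAdef
  set B : ℕ := d * n - E2 with hBdef
  have hQ1 : ∀ e, A ≤ (Finset.univ.filter fun f : G.Dart => ¬ Bad1 e f).card := by
    intro e
    have hsplit := Finset.card_filter_add_card_filter_not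
      (s := (Finset.univ : Finset G.Dart)) (p := Bad1 e)
    rw [Finset.card_univ, Fintype.card_eq_nat_card, hcardβ] at hsplit
    have hb := hB1 e
    omega
  have hQ2 : ∀ e f, B ≤ (Finset.univ.filter fun g : G.Dart => ¬ Bad2 e f g).card := by
    intro e f
    have hsplit := Finset.card_filter_add_card_filter_not
      (s := (Finset.univ : Finset G.Dart)) (p := Bad2 e f)
    rw [Finset.card_univ, Fintype.card_eq_nat_card, hcardβ] at hsplit
    have hb := hB2 e f
    omega
  -- the constructed set of triples
  set S : Finset (Σ _ : (G ⊓ Hᶜ).Dart, Σ _ : G.Dart, G.Dart) :=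
    Finset.univ.sigma (fun e => (Finset.univ.filter fun f : G.Dart => ¬ Bad1 e f).sigma
      (fun f => Finset.univ.filter fun g : G.Dart => ¬ Bad2 e f g)) with hS
  have hScard : 2 * i * (A * B) ≤ S.card := by
    rw [hS, Finset.card_sigma]
    have key : ∀ e ∈ (Finset.univ : Finset (G ⊓ Hᶜ).Dart), A * B ≤
        ((Finset.univ.filter fun f : G.Dart => ¬ Bad1 e f).sigma
          (fun f => Finset.univ.filter fun g : G.Dart => ¬ Bad2 e f g)).card := by
      intro e _
      rw [Finset.card_sigma]
      calc A * B ≤ (Finset.univ.filter fun f : G.Dart => ¬ Bad1 e f).card * B :=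
            Nat.mul_le_mul_right B (hQ1 e)
        _ = ∑ f ∈ (Finset.univ.filter fun f : G.Dart => ¬ Bad1 e f), B := by
            rw [Finset.sum_const, smul_eq_mul]
        _ ≤ _ := Finset.sum_le_sum (fun f _ => hQ2 e f)
    calc 2 * i * (A * B) = ∑ _e ∈ (Finset.univ : Finset (G ⊓ Hᶜ).Dart), A * B := by
          rw [Finset.sum_const, smul_eq_mul, Finset.card_univ, Fintype.card_eq_nat_card, hcardα]
      _ ≤ _ := Finset.sum_le_sum key
  -- evaluation of 6-vectors
  have hvec : ∀ v0 v1 v2 v3 v4 v5 : Fin n,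
      (![v0, v1, v2, v3, v4, v5] : Fin 6 → Fin n) 0 = v0 ∧
      (![v0, v1, v2, v3, v4, v5] : Fin 6 → Fin n) 1 = v1 ∧
      (![v0, v1, v2, v3, v4, v5] : Fin 6 → Fin n) 2 = v2 ∧
      (![v0, v1, v2, v3, v4, v5] : Fin 6 → Fin n) 3 = v3 ∧
      (![v0, v1, v2, v3, v4, v5] : Fin 6 → Fin n) 4 = v4 ∧
      (![v0, v1, v2, v3, v4, v5] : Fin 6 → Fin n) 5 = v5 := by
    intro v0 v1 v2 v3 v4 v5
    exact ⟨rfl, rfl, rfl, rfl, rfl, rfl⟩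
  have hH' : ∀ a b : Fin n, a ≠ b → ¬ Hᶜ.Adj a b → H.Adj a b := by
    intro a b hne hc
    by_contra hH''
    exact hc ⟨hne, hH''⟩
  -- lower bound: inject S into valid tuples
  have hlow : S.card ≤ f3 H G := by
    rw [f3, ← Nat.card_eq_finsetCard]
    have hmem : ∀ x : {x // x ∈ S}, (¬ Bad1 x.1.1 x.1.2.1) ∧ (¬ Bad2 x.1.1 x.1.2.1 x.1.2.2) := by
      rintro ⟨⟨e, f, g⟩, hx⟩
      rw [hS] at hx
      simp only [Finset.mem_sigma, Finset.mem_univ, Finset.mem_filter, true_and] at hx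
      exact ⟨hx.1, hx.2⟩
    have hvalid : ∀ x : {x // x ∈ S},
        Valid3Switch H G (x.1.1.fst) (x.1.1.snd) (x.1.2.1.fst) (x.1.2.1.snd)
          (x.1.2.2.fst) (x.1.2.2.snd) := by
      intro x
      obtain ⟨hf, hg⟩ := hmem x
      set e := x.1.1
      set f := x.1.2.1
      set g := x.1.2.2
      simp only [hBad1] at hf
      simp only [hBad2] at hg
      push_neg at hf hg
      obtain ⟨hf1, hf2, hf3', hf4, hf5, hf6, hf7⟩ := hf
      obtain ⟨hg1, hg2, hg3, hg4, hg5, hg6, hg7, hg8, hg9, hg10, hg11, hg12⟩ := hg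
      have headj : G.Adj e.fst e.snd ∧ Hᶜ.Adj e.fst e.snd := e.adj
      refine ⟨⟨headj.1, headj.2⟩, ⟨f.adj, hH' _ _ f.adj.ne hf1⟩, ⟨g.adj, hH' _ _ g.adj.ne hg1⟩,
        ⟨fun hc => hg4 hc, hH' _ _ (Ne.symm hg10) hg5⟩,
        ⟨fun hc => hf2 hc, hH' _ _ (Ne.symm hf4) hf3'⟩,
        ⟨fun hc => hg2 hc, hH' _ _ (Ne.symm hg6) hg3⟩, ?_, ?_⟩
      · -- pairwise distinct [e.fst, e.snd, f.snd, g.fst]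
        refine List.Pairwise.cons ?_ (List.Pairwise.cons ?_ (List.Pairwise.cons ?_
          (List.Pairwise.cons (fun b hb => absurd hb List.not_mem_nil) List.Pairwise.nil)))
        · intro b hb
          simp only [List.mem_cons, List.mem_singleton, List.not_mem_nil, or_false] at hb
          rcases hb with rfl | rfl | rfl
          · exact headj.1.ne
          · exact Ne.symm hf6
          · exact Ne.symm hg7
        · intro b hb
          simp only [List.mem_cons, List.mem_singleton, List.not_mem_nil, or_false] at hb
          rcases hb with rfl | rfl
          · exact Ne.symm hf7
          · exact Ne.symm hg8
        · intro b hb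
          simp only [List.mem_cons, List.not_mem_nil, or_false] at hb
          rcases hb with rfl
          · exact Ne.symm hg6
      · intro x hx
        simp only [List.mem_cons, List.not_mem_nil, or_false] at hx
        rcases hx with rfl | rfl | rfl | rfl
        · exact ⟨hf5, hg10⟩
        · exact ⟨hf4, hg11⟩
        · exact ⟨f.adj.ne, hg12⟩
        · exact ⟨fun hc => hg9 (hc.symm ▸ rfl), g.adj.ne'⟩
    apply Nat.card_le_card_of_injective (fun x : {x // x ∈ S} =>
      (⟨![x.1.1.fst, x.1.1.snd, x.1.2.1.fst, x.1.2.1.snd, x.1.2.2.fst, x.1.2.2.snd], by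
        obtain ⟨h0, h1, h2, h3, h4, h5⟩ := hvec (x.1.1.fst) (x.1.1.snd) (x.1.2.1.fst)
          (x.1.2.1.snd) (x.1.2.2.fst) (x.1.2.2.snd)
        rw [h0, h1, h2, h3, h4, h5]
        exact hvalid x⟩ : {v : Fin 6 → Fin n //
          Valid3Switch H G (v 0) (v 1) (v 2) (v 3) (v 4) (v 5)}))
    rintro ⟨⟨e, f, g⟩, hx⟩ ⟨⟨e', f', g'⟩, hy⟩ hxy
    have hfun := congrArg Subtype.val hxy
    simp only at hfun
    obtain ⟨h0, h1, h2, h3, h4, h5⟩ := hvec e.fst e.snd f.fst f.snd g.fst g.snd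
    obtain ⟨h0', h1', h2', h3', h4', h5'⟩ := hvec e'.fst e'.snd f'.fst f'.snd g'.fst g'.snd
    have he : e = e' := SimpleGraph.Dart.ext _ _ (Prod.ext
      (by rw [← h0, ← h0', hfun]) (by rw [← h1, ← h1', hfun]))
    have hff : f = f' := SimpleGraph.Dart.ext _ _ (Prod.ext
      (by rw [← h2, ← h2', hfun]) (by rw [← h3, ← h3', hfun]))
    have hgg : g = g' := SimpleGraph.Dart.ext _ _ (Prod.ext
      (by rw [← h4, ← h4', hfun]) (by rw [← h5, ← h5', hfun]))
    subst he; subst hff; subst hgg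
    rfl
  -- upper bound: inject valid tuples into dart triples
  have hup : f3 H G ≤ 2 * i * ((d * n) * (d * n)) := by
    rw [f3]
    have hinj := Nat.card_le_card_of_injective
      (fun x : {v : Fin 6 → Fin n //
          Valid3Switch H G (v 0) (v 1) (v 2) (v 3) (v 4) (v 5)} =>
        ((⟨(x.1 0, x.1 1), ⟨x.2.1.1, x.2.1.2⟩⟩ : (G ⊓ Hᶜ).Dart),
         (⟨(x.1 2, x.1 3), x.2.2.1.1⟩ : G.Dart),
         (⟨(x.1 4, x.1 5), x.2.2.2.1.1⟩ : G.Dart)))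
      (by
        rintro ⟨v, hv⟩ ⟨w, hw⟩ h
        simp only [Prod.mk.injEq, SimpleGraph.Dart.ext_iff, Prod.ext_iff] at h
        obtain ⟨⟨e0, e1⟩, ⟨e2, e3⟩, ⟨e4, e5⟩⟩ := h
        refine Subtype.ext (funext fun j => ?_)
        fin_cases j
        · exact e0
        · exact e1
        · exact e2
        · exact e3
        · exact e4
        · exact e5)
    rw [Nat.card_prod, Nat.card_prod, hcardα, hcardβ] at hinj
    exact le_trans hinj (le_of_eq (by ring))
  -- final arithmetic
  have hE1eq : E1 = 2 * i + 4 * d + (d * d + Δ * d) := by rw [hE1]; ring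
  have hE2eq : E2 = 2 * i + 7 * d + 2 * (d * d + Δ * d) := by rw [hE2]; ring
  constructor
  · -- lower bound
    have h1 : 2 * i * (A * B) ≤ f3 H G := le_trans hScard hlow
    have h1' : (2 : ℤ) * i * ((A : ℤ) * B) ≤ (f3 H G : ℤ) := by exact_mod_cast h1
    have hf30 : (0 : ℤ) ≤ (f3 H G : ℤ) := Int.natCast_nonneg _
    have hi0 : (0 : ℤ) ≤ (i : ℤ) := Int.natCast_nonneg _
    have hd0 : (0 : ℤ) ≤ (d : ℤ) := Int.natCast_nonneg _
    have hΔ0 : (0 : ℤ) ≤ (Δ : ℤ) := Int.natCast_nonneg _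
    have hc0 : (0 : ℤ) ≤ (d : ℤ) * d + (Δ : ℤ) * d := by positivity
    have hA0 : (0 : ℤ) ≤ (A : ℤ) := Int.natCast_nonneg _
    have hB0 : (0 : ℤ) ≤ (B : ℤ) := Int.natCast_nonneg _
    have hdnZ : ((2 : ℤ) * i + 7 * d) ≤ (d : ℤ) * n := by exact_mod_cast hdn
    have hAge : (d : ℤ) * n - 2 * i - 4 * d - ((d : ℤ) * d + (Δ : ℤ) * d) ≤ (A : ℤ) := by
      have h2 : d * n ≤ A + E1 := by omega
      have h3 : ((d : ℤ) * n) ≤ (A : ℤ) + (E1 : ℤ) := by exact_mod_cast h2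
      have h4 : (E1 : ℤ) = 2 * i + 4 * d + ((d : ℤ) * d + (Δ : ℤ) * d) := by
        rw [hE1]; push_cast; ring
      linarith
    have hBge : (d : ℤ) * n - 2 * i - 7 * d - 2 * ((d : ℤ) * d + (Δ : ℤ) * d) ≤ (B : ℤ) := by
      have h2 : d * n ≤ B + E2 := by omega
      have h3 : ((d : ℤ) * n) ≤ (B : ℤ) + (E2 : ℤ) := by exact_mod_cast h2
      have h4 : (E2 : ℤ) = 2 * i + 7 * d + 2 * ((d : ℤ) * d + (Δ : ℤ) * d) := by
        rw [hE2]; push_cast; ring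
      linarith
    exact arith_lower i d n Δ A B (f3 H G) hi0 hd0 hΔ0 hdnZ hA0 hB0 hAge hBge
      (by linarith [h1']) hf30
  · have hcast : (f3 H G : ℤ) ≤ ((2 * i * ((d * n) * (d * n)) : ℕ) : ℤ) := by exact_mod_cast hup
    refine le_trans hcast (le_of_eq ?_)
    push_cast
    ring
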